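/- Let u, v ∈ ℂⁿ (n ≥ 2) with v having pairwise distinct coordinates, and 1 ≤ p ≤ ∞. If ‖(u - v)/d(v)‖_p < 1/2, then u also has pairwise distinct coordinates. -/

import Mathlib

open scoped ENNReal

noncomputable def pnorm (p : ℝ≥0∞) {n : ℕ} (w : Fin n → ℝ) : ℝ :=
  ‖(WithLp.equiv p (Fin n → ℝ)).symm w‖

noncomputable def dmin {n : ℕ} (v : Fin n → ℂ) (i : Fin n) : ℝ :=
  ⨅ j : {j : Fin n // j ≠ i}, ‖v i - v j.1‖

lemma apply_le_pnorm (p : ℝ≥0∞) (hp : 1 ≤ p) {n : ℕ} (w : Fin n → ℝ) (k : Fin n) :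
    |w k| ≤ pnorm p w := by
  unfold pnorm
  rcases eq_or_ne p ∞ with rfl | hpt
  · rw [PiLp.norm_eq_ciSup]
    have := le_ciSup (f := fun i => ‖(WithLp.equiv ⊤ (Fin n → ℝ)).symm w i‖)
      (Finite.bddAbove_range _) k
    simpa using this
  · have hpr : 0 < p.toReal := ENNReal.toReal_pos (fun h0 => by simp [h0] at hp) hpt
    rw [PiLp.norm_eq_sum hpr]
    have h1 : |w k| = (|w k| ^ p.toReal) ^ (1 / p.toReal) := by
      rw [← Real.rpow_mul (abs_nonneg _), mul_one_div, div_self hpr.ne', Real.rpow_one]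
    rw [h1]
    apply Real.rpow_le_rpow (by positivity) _ (by positivity)
    have := Finset.single_le_sum (f := fun i => ‖(WithLp.equiv p (Fin n → ℝ)).symm w i‖ ^ p.toReal)
      (fun i _ => by positivity) (Finset.mem_univ k)
    simpa [Real.norm_eq_abs] using this

lemma dmin_pos {n : ℕ} (hn : 2 ≤ n) (v : Fin n → ℂ) (hv : Function.Injective v) (i : Fin n) :
    0 < dmin v i := by
  have hne : Nonempty {j : Fin n // j ≠ i} := by
    obtain ⟨j, hj⟩ := Fintype.exists_ne_of_one_lt_card (by simp; omega) i
    exact ⟨⟨j, hj⟩⟩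
  obtain ⟨j₀, hj₀⟩ := Finite.exists_min (fun j : {j : Fin n // j ≠ i} => ‖v i - v j.1‖)
  have hpos : 0 < ‖v i - v j₀.1‖ := by
    rw [norm_pos_iff, sub_ne_zero]
    exact fun he => j₀.2 (hv he.symm)
  exact lt_of_lt_of_le hpos (le_ciInf hj₀)

lemma dmin_le {n : ℕ} (v : Fin n → ℂ) {i j : Fin n} (hij : j ≠ i) :
    dmin v i ≤ ‖v i - v j‖ := by
  have : Nonempty {j : Fin n // j ≠ i} := ⟨⟨j, hij⟩⟩
  unfold dmin
  exact ciInf_le (Finite.bddBelow_range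
    (fun j : {j : Fin n // j ≠ i} => ‖v i - v j.1‖)) ⟨j, hij⟩

theorem u_distinct_components (n : ℕ) (hn : 2 ≤ n) (u v : Fin n → ℂ)
    (hv : Function.Injective v) (p : ℝ≥0∞) (hp : 1 ≤ p)
    (h : pnorm p (fun k => ‖u k - v k‖ / dmin v k) < 1/2) :
    Function.Injective u := by
  have key : ∀ k, ‖u k - v k‖ < dmin v k / 2 := by
    intro k
    have hd := dmin_pos hn v hv k
    have h1 := apply_le_pnorm p hp (fun k => ‖u k - v k‖ / dmin v k) k
    rw [abs_of_nonneg (by positivity)] at h1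
    have h2 : ‖u k - v k‖ / dmin v k < 1/2 := lt_of_le_of_lt h1 h
    rw [div_lt_iff₀ hd] at h2
    linarith [h2]
  intro i j hij
  by_contra hne
  have hji : j ≠ i := fun e => hne e.symm
  have hij' : i ≠ j := hne
  have d1 : dmin v i ≤ ‖v i - v j‖ := dmin_le v hji
  have d2 : dmin v j ≤ ‖v i - v j‖ := by
    have := dmin_le v hij'
    rwa [norm_sub_rev] at this
  have tri : ‖v i - v j‖ ≤
      ‖u i - v i‖ + ‖u i - u j‖ + ‖u j - v j‖ := by
    have : v i - v j = -(u i - v i) + (u i - u j) + (u j - v j) := by ring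
    rw [this]
    calc ‖-(u i - v i) + (u i - u j) + (u j - v j)‖
        ≤ ‖-(u i - v i) + (u i - u j)‖ + ‖u j - v j‖ :=
          norm_add_le _ _
      _ ≤ ‖-(u i - v i)‖ + ‖u i - u j‖ + ‖u j - v j‖ := by
          gcongr; exact norm_add_le _ _
      _ = ‖u i - v i‖ + ‖u i - u j‖ + ‖u j - v j‖ := by
          rw [norm_neg]
  have huij : ‖u i - u j‖ = 0 := by rw [hij, sub_self, norm_zero]
  have k1 := key i
  have k2 := key j
  linarith
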